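/- arXiv:2507.12361 — 9 statements merged into one kernel-verified Lean document; each statement's English description precedes it below -/
import Mathlib

section
/- Assuming the Axiom of Choice: if τ is an inexact linear order type and L is a linear order with [L]^τ nonempty, then L ↛ (τ)^τ_2, i.e., there is a 2-colouring of [L]^τ with no homogeneous set of order type τ. -/
set_option linter.unusedSectionVars false
section Aux
variable {τ : Type*} [LinearOrder τ] {L : Type*} [LinearOrder L]

theorem exists_proper_tau_subset
    (hinexact : ∃ s : Set τ, s ≠ Set.univ ∧ Nonempty (↥s ≃o τ))
    (H : Set L) (hH : Nonempty (↥H ≃o τ)) :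
    ∃ t : Set L, t ⊆ H ∧ t ≠ H ∧ Nonempty (↥t ≃o τ) := by
  obtain ⟨s, hs, ⟨f⟩⟩ := hinexact
  obtain ⟨e⟩ := hH
  set φ : τ → L := fun y => (e.symm y : L) with hφ
  have hmono : StrictMono φ := fun a b hab => by
    simpa [hφ, Subtype.coe_lt_coe] using (e.symm.strictMono hab)
  refine ⟨φ '' s, ?_, ?_, ⟨(((hmono.strictMonoOn s).orderIso φ s).symm.trans f)⟩⟩
  · rintro x ⟨y, _, rfl⟩; exact (e.symm y).2
  · intro heq
    obtain ⟨y, hy⟩ : ∃ y : τ, y ∉ s := by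
      by_contra h; push_neg at h
      exact hs (Set.eq_univ_of_forall h)
    have hx : φ y ∈ H := (e.symm y).2
    rw [← heq] at hx
    obtain ⟨y', hy', hyy⟩ := hx
    exact hy (hmono.injective hyy ▸ hy')

variable (g : Set L → Set L)
variable (tau : Set L → Prop)
variable (hg1 : ∀ X, g X ⊆ X)
variable (hg2 : ∀ X, tau X → g X ≠ X)
variable (hg3 : ∀ X, tau X → tau (g X))
variable (hg4 : ∀ X, ¬ tau X → g X = X)

/-- "Share a common iterate" setoid. -/
def chainSetoid : Setoid (Set L) where
  r X Y := ∃ m n, g^[m] X = g^[n] Y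
  iseqv := by
    refine ⟨fun X => ⟨0, 0, rfl⟩, fun {X Y} ⟨m, n, h⟩ => ⟨n, m, h.symm⟩,
      fun {X Y Z} ⟨m, n, h1⟩ ⟨p, q, h2⟩ => ⟨p + m, n + q, ?_⟩⟩
    rw [Function.iterate_add_apply, h1, ← Function.iterate_add_apply,
      Nat.add_comm p n, Function.iterate_add_apply, h2, ← Function.iterate_add_apply]

noncomputable def rep (X : Set L) : Set L :=
  Quotient.out (@Quotient.mk _ (chainSetoid g) X)

theorem rep_rel (X : Set L) : ∃ m n, g^[m] X = g^[n] (rep g X) :=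
  (chainSetoid g).symm (Quotient.mk_out X)

theorem rep_eq_of_rel {X Y : Set L} (h : ∃ m n, g^[m] X = g^[n] Y) :
    rep g X = rep g Y := by
  unfold rep
  rw [Quotient.sound (s := chainSetoid g) h]

include hg1 in
theorem iter_subset (X : Set L) {i j : ℕ} (h : i ≤ j) : g^[j] X ⊆ g^[i] X := by
  obtain ⟨k, rfl⟩ := Nat.exists_eq_add_of_le h
  clear h
  induction k with
  | zero => exact subset_rfl
  | succ k ih =>
      rw [show i + (k+1) = (i + k) + 1 from rfl, Function.iterate_succ_apply']
      exact (hg1 _).trans ih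

include hg4 in
theorem iter_fix {X : Set L} (h : ¬ tau X) (k : ℕ) : g^[k] X = X := by
  induction k with
  | zero => rfl
  | succ k ih => rw [Function.iterate_succ_apply', ih, hg4 _ h]

include hg3 in
theorem iter_tau (X : Set L) (hX : tau X) (j : ℕ) : tau (g^[j] X) := by
  induction j with
  | zero => exact hX
  | succ j ih => rw [Function.iterate_succ_apply']; exact hg3 _ ih

include hg3 hg4 in
theorem iter_tau_of_rel {T Y : Set L} (hT : tau T)
    (h : ∃ m n, g^[m] Y = g^[n] T) (k : ℕ) : tau (g^[k] Y) := by
  obtain ⟨m, n, hmn⟩ := h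
  have htau_iter : ∀ j, tau (g^[j] (g^[n] T)) := fun j => by
    rw [← Function.iterate_add_apply]; exact iter_tau g tau hg3 T hT _
  by_contra hk
  rcases Nat.le_total m k with hmk | hkm
  · obtain ⟨d, rfl⟩ := Nat.exists_eq_add_of_le hmk
    have : g^[m + d] Y = g^[d] (g^[n] T) := by
      rw [Nat.add_comm, Function.iterate_add_apply, hmn]
    exact hk (this ▸ htau_iter d)
  · -- k ≤ m, g^[k] Y not tau, so fixed from k on; g^[m] Y = g^[k] Y not tau, contra
    obtain ⟨d, rfl⟩ := Nat.exists_eq_add_of_le hkm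
    have hfix : g^[k + d] Y = g^[k] Y := by
      rw [Nat.add_comm, Function.iterate_add_apply]
      exact iter_fix g tau hg4 hk d
    have : tau (g^[k] Y) := by
      rw [← hfix, hmn]; exact htau_iter 0
    exact hk this
include hg1 hg2 in
theorem iter_ne {Y : Set L} (hall : ∀ k, tau (g^[k] Y)) {i j : ℕ} (h : i < j) :
    g^[i] Y ≠ g^[j] Y := by
  intro heq
  have hsub : g^[j] Y ⊆ g (g^[i] Y) := by
    have hs := iter_subset g hg1 Y (Nat.succ_le_of_lt h)
    rwa [Function.iterate_succ_apply'] at hs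
  have hne : g (g^[i] Y) ≠ g^[i] Y := hg2 _ (hall i)
  obtain ⟨x, hx1, hx2⟩ : ∃ x, x ∈ g^[i] Y ∧ x ∉ g (g^[i] Y) := by
    by_contra hc
    push_neg at hc
    exact hne (Set.Subset.antisymm (hg1 _) hc)
  exact hx2 (hsub (heq ▸ hx1))

include hg1 hg2 in
theorem iter_inj {Y : Set L} (hall : ∀ k, tau (g^[k] Y)) {i j : ℕ}
    (heq : g^[i] Y = g^[j] Y) : i = j := by
  rcases lt_trichotomy i j with h | h | h
  · exact absurd heq (iter_ne g tau hg1 hg2 hall h)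
  · exact h
  · exact absurd heq.symm (iter_ne g tau hg1 hg2 hall h)

include hg1 hg2 in
theorem parity_cancel {X R : Set L} (hall : ∀ k, tau (g^[k] R)) {a b c d : ℕ}
    (h1 : g^[a] X = g^[b] R) (h2 : g^[c] X = g^[d] R) :
    (Even (a + b) ↔ Even (c + d)) := by
  have e1 : g^[c + a] X = g^[c + b] R := by
    rw [Function.iterate_add_apply, h1, ← Function.iterate_add_apply]
  have e2 : g^[c + a] X = g^[a + d] R := by
    rw [Nat.add_comm c a, Function.iterate_add_apply, h2, ← Function.iterate_add_apply]
  have := iter_inj g tau hg1 hg2 hall (e1.symm.trans e2)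
  rw [Nat.even_iff, Nat.even_iff]
  omega
end Aux

/-- (ZFC) If `τ` is inexact (some proper subset of `τ` is order-isomorphic to `τ`)
and `L` has at least one subset of order type `τ`, then `L ↛ (τ)^τ_2`: there is a
2-colouring of the subsets of `L` of order type `τ` with no homogeneous set of
order type `τ`. -/
theorem inexact_implies_no_partition_relation
    (τ : Type*) [LinearOrder τ] (L : Type*) [LinearOrder L]
    (hinexact : ∃ s : Set τ, s ≠ Set.univ ∧ Nonempty (↥s ≃o τ))
    (hne : ∃ A : Set L, Nonempty (↥A ≃o τ)) :
    ∃ F : Set L → Fin 2, ∀ H : Set L, Nonempty (↥H ≃o τ) →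
      ∃ s : Set L, s ⊆ H ∧ Nonempty (↥s ≃o τ) ∧ F s ≠ F H := by
  classical
  set tau : Set L → Prop := fun X => Nonempty (↥X ≃o τ) with htau
  set g : Set L → Set L := fun X =>
    if h : tau X then (exists_proper_tau_subset hinexact X h).choose else X with hgdef
  have hg1 : ∀ X, g X ⊆ X := by
    intro X
    by_cases h : tau X
    · simp only [hgdef, dif_pos h]
      exact (exists_proper_tau_subset hinexact X h).choose_spec.1
    · simp [hgdef, dif_neg h]
  have hg2 : ∀ X, tau X → g X ≠ X := by
    intro X h
    simp only [hgdef, dif_pos h]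
    exact (exists_proper_tau_subset hinexact X h).choose_spec.2.1
  have hg3 : ∀ X, tau X → tau (g X) := by
    intro X h
    simp only [hgdef, dif_pos h]
    exact (exists_proper_tau_subset hinexact X h).choose_spec.2.2
  have hg4 : ∀ X, ¬ tau X → g X = X := fun X h => by simp [hgdef, dif_neg h]
  refine ⟨fun X => if (∃ m n, g^[m] X = g^[n] (rep g X) ∧ Even (m + n)) then 0 else 1,
    fun H hH => ?_⟩
  refine ⟨g H, hg1 H, hg3 H hH, ?_⟩
  set R : Set L := rep g H with hR
  have hrepg : rep g (g H) = R := by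
    rw [hR]
    exact rep_eq_of_rel g ⟨0, 1, rfl⟩
  obtain ⟨m, n, hmn⟩ := rep_rel g H
  have hallR : ∀ k, tau (g^[k] R) :=
    iter_tau_of_rel g tau hg3 hg4 hH ⟨n, m, hmn.symm⟩
  -- parity of any witness pair for H
  have keyH : ∀ a b : ℕ, g^[a] H = g^[b] R → (Even (a + b) ↔ Even (m + n)) :=
    fun a b h => parity_cancel g tau hg1 hg2 hallR h hmn
  have keyG : ∀ a b : ℕ, g^[a] (g H) = g^[b] R → (Even (a + b) ↔ ¬ Even (m + n)) := by
    intro a b h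
    have h' : g^[a + 1] H = g^[b] R := by
      rw [Function.iterate_succ_apply]; exact h
    have := keyH (a + 1) b h'
    rw [Nat.even_iff, Nat.even_iff] at *
    omega
  by_cases hpar : Even (m + n)
  · have hFH : (∃ a b, g^[a] H = g^[b] (rep g H) ∧ Even (a + b)) :=
      ⟨m, n, hmn, hpar⟩
    have hFG : ¬ (∃ a b, g^[a] (g H) = g^[b] (rep g (g H)) ∧ Even (a + b)) := by
      rintro ⟨a, b, hab, hev⟩
      rw [hrepg] at hab
      exact (keyG a b hab).mp hev hpar
    simp only [if_pos hFH, if_neg hFG]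
    decide
  · have hFH : ¬ (∃ a b, g^[a] H = g^[b] (rep g H) ∧ Even (a + b)) := by
      rintro ⟨a, b, hab, hev⟩
      exact hpar ((keyH a b hab).mp hev)
    have hFG : (∃ a b, g^[a] (g H) = g^[b] (rep g (g H)) ∧ Even (a + b)) := by
      refine ⟨m, n + 1, ?_, ?_⟩
      · rw [hrepg, ← Function.iterate_succ_apply, Function.iterate_succ_apply',
          Function.iterate_succ_apply', hR, hmn]
      · rw [Nat.even_iff] at *; omega
    simp only [if_pos hFG, if_neg hFH]
    decide
end

section
/- Let κ be an uncountable cardinal that is indecomposable, meaning κ cannot be written as μ₀ + μ₁ with both μ₀, μ₁ strictly smaller than κ. Then 2^{ℵ₀} ↛ (κ)^κ: there is a 2-colouring of the κ-sized subsets of ℝ with no homogeneous set of cardinality κ. Specifically, the colouring giving A colour 0 iff A contains its infimum or its supremum (as a subset of ℝ) has no homogeneous set in [ℝ]^κ. -/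
/-! If `H` contains its infimum or supremum, discard the points of `H` with only countably
many points of `H` below them, or above them. A set of reals all of whose initial segments are
countable is countable (it is covered by its initial segments cut at rationals), so only
countably many points go and the rest still has cardinality `#H`; it contains neither its
infimum nor its supremum. Otherwise pick `a ∈ H`: by indecomposability one of `H ∩ (-∞, a]`,
`H ∩ [a, ∞)` has cardinality `κ`, and it contains `a` as its supremum or infimum. -/

open Set Cardinal TopologicalSpace

section SeparableOrder

variable {α : Type*} [LinearOrder α] [TopologicalSpace α] [OrderClosedTopology α]
  [DenselyOrdered α] [SeparableSpace α]

theorem Set.Countable.of_forall_countable_inter_Iio {A : Set α}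
    (h : ∀ x ∈ A, (A ∩ Iio x).Countable) : A.Countable := by
  obtain ⟨D, hD, hDense⟩ := exists_countable_dense α
  have hcover : A ⊆ (⋃ d ∈ D ∩ {d | ∃ y ∈ A, d < y}, A ∩ Iio d) ∪ (A ∩ upperBounds A) := by
    intro x hx
    by_cases hmax : x ∈ upperBounds A
    · exact Or.inr ⟨hx, hmax⟩
    · obtain ⟨y, hy, hxy⟩ := not_forall₂.1 hmax
      obtain ⟨d, hd, hxd, hdy⟩ := hDense.exists_between (not_le.1 hxy)
      exact Or.inl (mem_biUnion ⟨hd, y, hy, hdy⟩ ⟨hx, hxd⟩)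
  refine .mono hcover (.union ((hD.mono inter_subset_left).biUnion ?_) ?_)
  · rintro d ⟨-, y, hy, hdy⟩
    exact (h y hy).mono (inter_subset_inter_right A (Iio_subset_Iio hdy.le))
  · exact Subsingleton.countable fun x hx y hy => le_antisymm (hy.2 hx.1) (hx.2 hy.1)

theorem countable_setOf_countable_inter_Iio (A : Set α) :
    {x ∈ A | (A ∩ Iio x).Countable}.Countable :=
  .of_forall_countable_inter_Iio fun _ hx =>
    hx.2.mono (inter_subset_inter_left _ fun _ hy => hy.1)

theorem countable_setOf_countable_inter_Ioi (A : Set α) :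
    {x ∈ A | (A ∩ Ioi x).Countable}.Countable :=
  countable_setOf_countable_inter_Iio (α := αᵒᵈ) A

end SeparableOrder

theorem Cardinal.mk_sdiff_of_countable {α : Type*} {S T : Set α} (hS : ℵ₀ < #S)
    (hT : T.Countable) : #(S \ T : Set α) = #S := by
  refine le_antisymm (mk_le_mk_of_subset sdiff_subset) (not_lt.1 fun hlt => ?_)
  exact (le_mk_sdiff_add_mk S T).not_gt (add_lt_of_lt hS.le hlt (hT.le_aleph0.trans_lt hS))

theorem csInf_notMem_sdiff {α : Type*} [ConditionallyCompleteLinearOrder α] {H C : Set α}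
    (hC : C.Countable) (hempty : sInf ∅ ∈ C)
    (hsmall : ∀ x ∈ H, (H ∩ Iio x).Countable → x ∈ C) : sInf (H \ C) ∉ H \ C := by
  intro hmem
  by_cases hbdd : BddBelow (H \ C)
  · refine hmem.2 (hsmall _ hmem.1 (hC.mono fun y hy => ?_))
    by_contra hyC
    exact hy.2.not_ge (csInf_le hbdd ⟨hy.1, hyC⟩)
  · rw [ConditionallyCompleteLinearOrder.csInf_of_not_bddBelow _ hbdd] at hmem
    exact hmem.2 hempty

theorem exists_subset_mk_eq_csInf_notMem_csSup_notMem {α : Type*}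
    [ConditionallyCompleteLinearOrder α] [TopologicalSpace α] [OrderClosedTopology α]
    [DenselyOrdered α] [SeparableSpace α] {H : Set α} (hH : ℵ₀ < #H) :
    ∃ s ⊆ H, #s = #H ∧ sInf s ∉ s ∧ sSup s ∉ s := by
  -- `sInf ∅` and `sSup ∅` are the junk values of `sInf` and `sSup` on unbounded sets
  set C := {x ∈ H | (H ∩ Iio x).Countable} ∪ {x ∈ H | (H ∩ Ioi x).Countable} ∪
    {sInf ∅, sSup ∅}
  have hC : C.Countable := ((countable_setOf_countable_inter_Iio H).union
    (countable_setOf_countable_inter_Ioi H)).union ((countable_singleton _).insert _)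
  refine ⟨H \ C, sdiff_subset, mk_sdiff_of_countable hH hC, ?_, ?_⟩
  · exact csInf_notMem_sdiff hC (Or.inr (Or.inl rfl)) fun x hx h => Or.inl (Or.inl ⟨hx, h⟩)
  · exact csInf_notMem_sdiff (α := αᵒᵈ) hC (Or.inr (Or.inr rfl))
      fun x hx h => Or.inl (Or.inr ⟨hx, h⟩)

theorem le_mk_or_le_mk_of_disjoint {α : Type*} {κ : Cardinal}
    (hind : ∀ μ₀ μ₁ : Cardinal, μ₀ < κ → μ₁ < κ → μ₀ + μ₁ ≠ κ) {B C : Set α}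
    (hBC : Disjoint B C) (h : #(B ∪ C : Set α) = κ) : κ ≤ #B ∨ κ ≤ #C := by
  by_contra! hlt
  exact hind _ _ hlt.1 hlt.2 (by rw [← mk_union_of_disjoint hBC, h])

theorem exists_subset_mk_eq_csInf_mem_or_csSup_mem {α : Type*}
    [ConditionallyCompleteLinearOrder α] {κ : Cardinal}
    (hind : ∀ μ₀ μ₁ : Cardinal, μ₀ < κ → μ₁ < κ → μ₀ + μ₁ ≠ κ) {H : Set α} (hH : #H = κ)
    (hne : H.Nonempty) : ∃ s ⊆ H, #s = κ ∧ (sInf s ∈ s ∨ sSup s ∈ s) := by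
  obtain ⟨a, ha⟩ := hne
  have hsplit : #((H ∩ Iic a) ∪ (H ∩ Ioi a) : Set α) = κ := by
    rw [← inter_union_distrib_left, Iic_union_Ioi, inter_univ, hH]
  have hdisj : Disjoint (H ∩ Iic a) (H ∩ Ioi a) :=
    (Iic_disjoint_Ioi le_rfl).mono inter_subset_right inter_subset_right
  have hmk {s : Set α} (hs : s ⊆ H) (hle : κ ≤ #s) : #s = κ :=
    le_antisymm (hH ▸ mk_le_mk_of_subset hs) hle
  rcases le_mk_or_le_mk_of_disjoint hind hdisj hsplit with hlow | hhigh
  · refine ⟨H ∩ Iic a, inter_subset_left, hmk inter_subset_left hlow, Or.inr ?_⟩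
    exact IsGreatest.csSup_mem ⟨⟨ha, le_rfl⟩, fun _ hx => hx.2⟩
  · have hIci : κ ≤ #(H ∩ Ici a : Set α) :=
      hhigh.trans (mk_le_mk_of_subset (inter_subset_inter_right H Ioi_subset_Ici_self))
    refine ⟨H ∩ Ici a, inter_subset_left, hmk inter_subset_left hIci, Or.inl ?_⟩
    exact IsLeast.csInf_mem ⟨⟨ha, le_rfl⟩, fun _ hx => hx.2⟩

/-- If `κ` is an uncountable indecomposable cardinal (it is not a sum of two
strictly smaller cardinals), then `2^{ℵ₀} ↛ (κ)^κ`: the colouring giving a set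
`A ⊆ ℝ` colour `0` iff `A` contains its infimum or its supremum has no
homogeneous set of cardinality `κ`. -/
theorem indecomposable_no_partition_relation
    (κ : Cardinal) (hκ : Cardinal.aleph0 < κ)
    (hind : ∀ μ₀ μ₁ : Cardinal, μ₀ < κ → μ₁ < κ → μ₀ + μ₁ ≠ κ) :
    ∃ F : Set ℝ → Fin 2,
      (∀ A : Set ℝ, F A = 0 ↔ (sInf A ∈ A ∨ sSup A ∈ A)) ∧
      ∀ H : Set ℝ, Cardinal.mk ↥H = κ →
        ∃ s : Set ℝ, s ⊆ H ∧ Cardinal.mk ↥s = κ ∧ F s ≠ F H := by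
  classical
  refine ⟨fun A => if sInf A ∈ A ∨ sSup A ∈ A then 0 else 1,
    fun A => by simp [or_iff_not_imp_left], fun H hH => ?_⟩
  by_cases hHcol : sInf H ∈ H ∨ sSup H ∈ H
  · obtain ⟨s, hsH, hs, hinf, hsup⟩ := exists_subset_mk_eq_csInf_notMem_csSup_notMem (hH ▸ hκ)
    refine ⟨s, hsH, hs.trans hH, ?_⟩
    simp [hHcol, hinf, hsup]
  · have hne : H.Nonempty := by
      rw [← nonempty_coe_sort, ← mk_ne_zero_iff, hH]; exact (aleph0_pos.trans hκ).ne'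
    obtain ⟨s, hsH, hs, hscol⟩ := exists_subset_mk_eq_csInf_mem_or_csSup_mem hind hH hne
    exact ⟨s, hsH, hs, by simp [hHcol, hscol]⟩
end

section
/- Fix an enumeration ⟨q_n : n ∈ ω⟩ of the rationals and for x < y reals define N(x,y) = min{n : q_n ∈ [x,y)}. Then every strictly increasing sequence ⟨x_k : k ∈ ω⟩ of reals has an infinite subsequence ⟨y_n : n ∈ ω⟩ which is N-increasing, i.e., N(y_n, y_{n+1}) < N(y_{n+1}, y_{n+2}) for all n. -/
/-- `Nidx q x y` is the least `n` with `x ≤ q n < y`, for a fixed enumeration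
`q` of the rationals. -/
noncomputable def Nidx (q : ℕ → ℚ) (x y : ℝ) : ℕ :=
  sInf {n : ℕ | x ≤ (q n : ℝ) ∧ (q n : ℝ) < y}

lemma Nidx_mem (q : ℕ → ℚ) (hq : Function.Surjective q) {x y : ℝ} (h : x < y) :
    x ≤ (q (Nidx q x y) : ℝ) ∧ (q (Nidx q x y) : ℝ) < y := by
  have hne : {n : ℕ | x ≤ (q n : ℝ) ∧ (q n : ℝ) < y}.Nonempty := by
    obtain ⟨r, hr1, hr2⟩ := exists_rat_btwn h
    obtain ⟨n, rfl⟩ := hq r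
    exact ⟨n, le_of_lt hr1, hr2⟩
  exact Nat.sInf_mem hne

lemma Nidx_le (q : ℕ → ℚ) {x y : ℝ} {n : ℕ} (h1 : x ≤ (q n : ℝ)) (h2 : (q n : ℝ) < y) :
    Nidx q x y ≤ n := Nat.sInf_le ⟨h1, h2⟩

/-- Every strictly increasing sequence of reals has an infinite subsequence
which is `N`-increasing: the indices `N(y_n, y_{n+1})` are strictly increasing. -/
theorem exists_N_increasing_subsequence
    (q : ℕ → ℚ) (hq : Function.Bijective q)
    (x : ℕ → ℝ) (hx : StrictMono x) :
    ∃ g : ℕ → ℕ, StrictMono g ∧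
      ∀ n : ℕ, Nidx q (x (g n)) (x (g (n + 1))) < Nidx q (x (g (n + 1))) (x (g (n + 2))) := by
  classical
  have hqs := hq.surjective
  set c : ℕ → ℕ := fun i => Nidx q (x i) (x (i + 1)) with hc
  have hcmem : ∀ i, x i ≤ (q (c i) : ℝ) ∧ (q (c i) : ℝ) < x (i + 1) :=
    fun i => Nidx_mem q hqs (hx (Nat.lt_succ_self i))
  -- the indices `c i` are pairwise distinct
  have hcinj : ∀ i j, i < j → c i ≠ c j := by
    intro i j hij heq
    have h1 := (hcmem i).2
    have h2 := (hcmem j).1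
    rw [heq] at h1
    have h3 : x (i + 1) ≤ x j := hx.monotone hij
    linarith
  -- (A): N over a big interval is ≤ each c i inside
  have hA : ∀ a i b, a ≤ i → i < b → Nidx q (x a) (x b) ≤ c i := by
    intro a i b hai hib
    exact Nidx_le q (le_trans (hx.monotone hai) (hcmem i).1)
      (lt_of_lt_of_le (hcmem i).2 (hx.monotone hib))
  -- (B): some c j inside is ≤ N over the big interval
  have hB : ∀ a b, a < b → ∃ j, a ≤ j ∧ j < b ∧ c j ≤ Nidx q (x a) (x b) := by
    intro a b hab
    obtain ⟨h1, h2⟩ := Nidx_mem q hqs (hx hab)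
    set N := Nidx q (x a) (x b) with hN
    set P : ℕ → Prop := fun j => x j ≤ (q N : ℝ) with hP
    have hPa : P a := h1
    have hb1 : a ≤ b - 1 := Nat.le_sub_one_of_lt hab
    set i := Nat.findGreatest P (b - 1) with hi
    have hPi : P i := Nat.findGreatest_spec hb1 hPa
    have hai : a ≤ i := Nat.le_findGreatest hb1 hPa
    have hib : i < b :=
      lt_of_le_of_lt (Nat.findGreatest_le _) (Nat.sub_lt (by omega) one_pos)
    refine ⟨i, hai, hib, ?_⟩
    have hup : (q N : ℝ) < x (i + 1) := by
      by_cases hcase : i + 1 ≤ b - 1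
      · have hnp := Nat.findGreatest_is_greatest (Nat.lt_succ_self i) hcase
        simpa [hP] using not_le.mp hnp
      · have hbi : b ≤ i + 1 := by omega
        exact lt_of_lt_of_le h2 (hx.monotone hbi)
    exact Nidx_le q hPi hup
  -- for each a there is an index i ≥ a minimizing c on [a, ∞)
  have hmin : ∀ a, ∃ i, a ≤ i ∧ ∀ j, a ≤ j → c i ≤ c j := by
    intro a
    have hne : {m | ∃ i, a ≤ i ∧ c i = m}.Nonempty := ⟨c a, a, le_rfl, rfl⟩
    obtain ⟨i, hai, hci⟩ := Nat.sInf_mem hne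
    exact ⟨i, hai, fun j hj => hci ▸ Nat.sInf_le ⟨j, hj, rfl⟩⟩
  choose I hI1 hI2 using hmin
  set g : ℕ → ℕ := fun n => Nat.rec 0 (fun _ p => I p + 1) n with hg
  have hgsucc : ∀ n, g (n + 1) = I (g n) + 1 := fun n => rfl
  have hgmono : StrictMono g := by
    apply strictMono_nat_of_lt_succ
    intro n
    rw [hgsucc]
    exact Nat.lt_succ_of_le (hI1 (g n))
  refine ⟨g, hgmono, fun n => ?_⟩
  have hlt2 : g (n + 1) < g (n + 2) := hgmono (Nat.lt_succ_self (n + 1))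
  have hN1 : Nidx q (x (g n)) (x (g (n + 1))) ≤ c (I (g n)) := by
    rw [hgsucc]
    exact hA _ _ _ (hI1 (g n)) (Nat.lt_succ_self _)
  obtain ⟨j, hj1, hj2, hj3⟩ := hB (g (n + 1)) (g (n + 2)) hlt2
  have hIj : I (g n) < j := by rw [hgsucc] at hj1; omega
  have hgj : g n ≤ j := le_trans (hI1 _) (le_of_lt hIj)
  have hcl : c (I (g n)) < c j := by
    have hle : c (I (g n)) ≤ c j := hI2 (g n) j hgj
    have hne := hcinj (I (g n)) j hIj
    omega
  omega
end

section
/- With N as above: if ⟨x_k : k ∈ ω⟩ is an N-increasing strictly increasing sequence of reals and A is any infinite subset of {N(x_k, x_{k+1}) : k ∈ ω}, then there is an infinite subsequence ⟨z_n⟩ of ⟨x_k⟩ such that {N(z_n, z_{n+1}) : n ∈ ω} = A. -/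
lemma Nidx_set_nonempty (q : ℕ → ℚ) (hq : Function.Surjective q) {x y : ℝ}
    (h : x < y) : {n : ℕ | x ≤ (q n : ℝ) ∧ (q n : ℝ) < y}.Nonempty := by
  obtain ⟨r, hr1, hr2⟩ := exists_rat_btwn h
  obtain ⟨n, rfl⟩ := hq r
  exact ⟨n, le_of_lt hr1, hr2⟩

/-- If `⟨x_k⟩` is an `N`-increasing strictly increasing sequence of reals and `A`
is an infinite subset of `{N(x_k, x_{k+1}) : k ∈ ω}`, then there is an infinite
subsequence `⟨z_n⟩ = ⟨x_{g(n)}⟩` with `{N(z_n, z_{n+1}) : n ∈ ω} = A`. -/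
theorem exists_subsequence_with_given_N_set
    (q : ℕ → ℚ) (hq : Function.Bijective q)
    (x : ℕ → ℝ) (hx : StrictMono x)
    (hN : ∀ k : ℕ, Nidx q (x k) (x (k + 1)) < Nidx q (x (k + 1)) (x (k + 2)))
    (A : Set ℕ) (hA : A.Infinite)
    (hsub : A ⊆ Set.range fun k => Nidx q (x k) (x (k + 1))) :
    ∃ g : ℕ → ℕ, StrictMono g ∧
      (Set.range fun n => Nidx q (x (g n)) (x (g (n + 1)))) = A := by
  set f : ℕ → ℕ := fun k => Nidx q (x k) (x (k + 1)) with hf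
  have hfmono : StrictMono f := strictMono_nat_of_lt_succ hN
  -- key: for i < j, Nidx q (x i) (x j) = f i
  have key : ∀ i j : ℕ, i < j → Nidx q (x i) (x j) = f i := by
    intro i j hij
    have hle : Nidx q (x i) (x j) ≤ f i := by
      apply Nat.sInf_le
      obtain ⟨h1, h2⟩ := Nidx_mem q hq.2 (hx (Nat.lt_succ_self i))
      exact ⟨h1, h2.trans_le (hx.monotone hij)⟩
    have hge : ∀ j : ℕ, i < j → f i ≤ Nidx q (x i) (x j) := by
      intro j hij
      induction j with
      | zero => omega
      | succ j ih =>
        rcases Nat.lt_or_ge i j with hij' | hij'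
        · obtain ⟨h1, h2⟩ := Nidx_mem q hq.2 (hx (Nat.lt_succ_of_lt hij'))
          rcases lt_or_ge ((q (Nidx q (x i) (x (j+1))) : ℝ)) (x j) with hc | hc
          · exact (ih hij').trans (Nat.sInf_le ⟨h1, hc⟩)
          · exact (hfmono.monotone (le_of_lt hij')).trans (Nat.sInf_le ⟨hc, h2⟩)
        · have : j = i := by omega
          subst this
          exact le_of_eq rfl
    exact le_antisymm hle (hge j hij)
  set S : Set ℕ := {k | f k ∈ A} with hS
  have himg : f '' S = A := by
    apply Set.Subset.antisymm
    · rintro _ ⟨k, hk, rfl⟩; exact hk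
    · intro a ha
      obtain ⟨k, rfl⟩ := hsub ha
      exact ⟨k, ha, rfl⟩
  have hSinf : S.Infinite := by
    intro hfin
    exact hA (himg ▸ hfin.image f)
  refine ⟨Nat.nth (· ∈ S), Nat.nth_strictMono hSinf, ?_⟩
  have hrange : Set.range (Nat.nth (· ∈ S)) = S := Nat.range_nth_of_infinite hSinf
  have heq : (fun n => Nidx q (x (Nat.nth (· ∈ S) n)) (x (Nat.nth (· ∈ S) (n + 1))))
      = f ∘ Nat.nth (· ∈ S) := by
    funext n
    exact key _ _ (Nat.nth_strictMono hSinf (Nat.lt_succ_self n))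
  rw [heq, Set.range_comp, hrange, himg]
end

section
/- In ZF, the partition relation ⟨ℝ,<⟩ → (ω)^ω holds if and only if ω → (ω)^ω holds. That is: every 2-colouring of the subsets of ℝ of order type ω has a homogeneous subset of ℝ of order type ω, if and only if every 2-colouring of the infinite subsets of ℕ has an infinite homogeneous set. -/
open Set

/-! Auxiliary machinery for the hard direction: coding ω-sequences of reals by
infinite sets of naturals via least rational indices. -/

/-- Fixed enumeration of the rationals inside `ℝ`. -/
noncomputable def RealOmega.qr (n : ℕ) : ℝ := (((Denumerable.eqv ℚ).symm n : ℚ) : ℝ)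

namespace RealOmega

lemma qr_surj (q : ℚ) : ∃ n, qr n = (q : ℝ) := by
  obtain ⟨n, hn⟩ := (Denumerable.eqv ℚ).symm.surjective q
  exact ⟨n, by rw [qr, hn]⟩

/-- Least index of a rational in `[x, y)`. -/
noncomputable def nIdx (x y : ℝ) : ℕ := sInf {n | x ≤ qr n ∧ qr n < y}

lemma nIdx_mem {x y : ℝ} (h : x < y) : x ≤ qr (nIdx x y) ∧ qr (nIdx x y) < y := by
  have hne : {n | x ≤ qr n ∧ qr n < y}.Nonempty := by
    obtain ⟨q, hq1, hq2⟩ := exists_rat_btwn h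
    obtain ⟨n, hn⟩ := qr_surj q
    exact ⟨n, by rw [Set.mem_setOf_eq, hn]; exact ⟨le_of_lt hq1, hq2⟩⟩
  exact Nat.sInf_mem hne

lemma nIdx_le {x y : ℝ} {n : ℕ} (h1 : x ≤ qr n) (h2 : qr n < y) : nIdx x y ≤ n :=
  Nat.sInf_le ⟨h1, h2⟩

/-- The code of an increasing sequence: `nCode x k` is the least index of a rational in
`[x k, x (k+1))`. -/
noncomputable def nCode (x : ℕ → ℝ) (k : ℕ) : ℕ := nIdx (x k) (x (k + 1))

lemma qr_nCode_strictMono {x : ℕ → ℝ} (hx : StrictMono x) :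
    StrictMono fun k => qr (nCode x k) := by
  intro i j hij
  calc qr (nCode x i) < x (i + 1) := (nIdx_mem (hx (lt_add_one i))).2
    _ ≤ x j := hx.monotone (by omega)
    _ ≤ qr (nCode x j) := (nIdx_mem (hx (lt_add_one j))).1

lemma nCode_injective {x : ℕ → ℝ} (hx : StrictMono x) : Function.Injective (nCode x) :=
  fun i j h => (qr_nCode_strictMono hx).injective (by rw [h])

/-- Key computation: if `nCode x i` is minimal among `nCode x m` for `i ≤ m < j`, then the
least rational index in `[x i, x j)` is `nCode x i`. -/
lemma nIdx_seg {x : ℕ → ℝ} (hx : StrictMono x) {i j : ℕ} (hij : i < j)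
    (hm : ∀ m, i ≤ m → m < j → nCode x i ≤ nCode x m) :
    nIdx (x i) (x j) = nCode x i := by
  have hxij : x i < x j := hx hij
  have hle : nIdx (x i) (x j) ≤ nCode x i := by
    obtain ⟨h1, h2⟩ := nIdx_mem (hx (lt_add_one i))
    exact nIdx_le h1 (lt_of_lt_of_le h2 (hx.monotone (by omega)))
  refine le_antisymm hle ?_
  set n := nIdx (x i) (x j) with hn
  obtain ⟨h1, h2⟩ := nIdx_mem hxij
  -- find the segment containing qr n
  classical
  set P : ℕ → Prop := fun m => x m ≤ qr n with hP
  set m := Nat.findGreatest P (j - 1) with hmdef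
  have hPi : P i := h1
  have him : i ≤ m := Nat.le_findGreatest (by omega) hPi
  have hmj : m ≤ j - 1 := Nat.findGreatest_le _
  have hPm : P m := Nat.findGreatest_spec (m := i) (by omega) hPi
  have hlt : qr n < x (m + 1) := by
    rcases eq_or_lt_of_le (show m + 1 ≤ j by omega) with h | h
    · exact h ▸ h2
    · by_contra hcon
      push_neg at hcon
      exact Nat.findGreatest_is_greatest (lt_add_one m) (by omega) hcon
  have : nCode x m ≤ n := nIdx_le hPm hlt
  exact le_trans (hm m him (by omega)) this

/-- Tail argmin: for any `g : ℕ → ℕ` and `m`, there is `j ≥ m` at which `g` attains its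
minimum on `[m, ∞)`. -/
lemma exists_argmin_tail (g : ℕ → ℕ) (m : ℕ) :
    ∃ j, m ≤ j ∧ ∀ j', m ≤ j' → g j ≤ g j' := by
  have hne : (Set.range fun t => g (m + t)).Nonempty := ⟨g (m + 0), ⟨0, rfl⟩⟩
  obtain ⟨t, ht⟩ := Nat.sInf_mem hne
  have ht' : g (m + t) = sInf (Set.range fun t => g (m + t)) := ht
  refine ⟨m + t, Nat.le_add_right m t, fun j' hj' => ?_⟩
  rw [ht']
  exact Nat.sInf_le ⟨j' - m, show g (m + (j' - m)) = g j' by congr 1; omega⟩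

/-- A strictly monotone selection of indices along which `nCode x` is minimal on tails. -/
noncomputable def argk (g : ℕ → ℕ) : ℕ → ℕ
  | 0 => (exists_argmin_tail g 0).choose
  | i + 1 => (exists_argmin_tail g (argk g i + 1)).choose

lemma argk_succ_lt (g : ℕ → ℕ) (i : ℕ) : argk g i < argk g (i + 1) :=
  (exists_argmin_tail g (argk g i + 1)).choose_spec.1

lemma argk_min (g : ℕ → ℕ) (i : ℕ) : ∀ j, argk g i ≤ j → g (argk g i) ≤ g j := by
  cases i with
  | zero => exact fun j hj => (exists_argmin_tail g 0).choose_spec.2 j (Nat.zero_le j)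
  | succ i =>
    intro j hj
    have h := (exists_argmin_tail g (argk g i + 1)).choose_spec
    exact h.2 j (le_trans h.1 hj)

lemma argk_strictMono (g : ℕ → ℕ) : StrictMono (argk g) :=
  strictMono_nat_of_lt_succ (argk_succ_lt g)

/-- Every subset of a linear order with an order iso to `ℕ` is the range of a strictly
monotone sequence. -/
lemma exists_strictMono_of_iso {α : Type*} [LinearOrder α] {s : Set α} (e : ↥s ≃o ℕ) :
    ∃ x : ℕ → α, StrictMono x ∧ Set.range x = s := by
  refine ⟨fun n => (e.symm n : α), fun a b h => by exact_mod_cast e.symm.strictMono h, ?_⟩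
  ext a
  constructor
  · rintro ⟨n, rfl⟩; exact (e.symm n).2
  · intro ha; exact ⟨e ⟨a, ha⟩, by simp⟩

lemma nonempty_iso_of_strictMono {α : Type*} [LinearOrder α] {x : ℕ → α} (hx : StrictMono x) :
    Nonempty (↥(Set.range x) ≃o ℕ) :=
  ⟨(StrictMono.orderIso x hx).symm⟩

open Classical in
/-- The colouring of real sets induced by a colouring of natural sets. -/
noncomputable def G (F : Set ℕ → Fin 2) (s : Set ℝ) : Fin 2 :=
  if h : ∃ x : ℕ → ℝ, StrictMono x ∧ Set.range x = s then
    F (Set.range (nCode h.choose)) else 0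

lemma G_eq (F : Set ℕ → Fin 2) {x : ℕ → ℝ} (hx : StrictMono x) :
    G F (Set.range x) = F (Set.range (nCode x)) := by
  have h : ∃ z : ℕ → ℝ, StrictMono z ∧ Set.range z = Set.range x := ⟨x, hx, rfl⟩
  have hs := h.choose_spec
  have hxz : h.choose = x := (StrictMono.range_inj hs.1 hx).mp hs.2
  unfold G
  rw [dif_pos h, hxz]

end RealOmega

open RealOmega in
/-- (ZF) `⟨ℝ,<⟩ → (ω)^ω` if and only if `ω → (ω)^ω`: every 2-colouring of the
subsets of `ℝ` of order type `ω` has a homogeneous set of order type `ω` iff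
every 2-colouring of the infinite subsets of `ℕ` has an infinite homogeneous
set. -/
theorem real_omega_iff_omega_omega :
    (∀ F : Set ℝ → Fin 2, ∃ H : Set ℝ, Nonempty (↥H ≃o ℕ) ∧
        ∀ s : Set ℝ, s ⊆ H → Nonempty (↥s ≃o ℕ) → F s = F H) ↔
    (∀ F : Set ℕ → Fin 2, ∃ H : Set ℕ, H.Infinite ∧
        ∀ s : Set ℕ, s ⊆ H → s.Infinite → F s = F H) := by
  classical
  constructor
  · -- hard direction: from the real relation to the ω relation
    intro hreal F
    obtain ⟨H, ⟨e⟩, hhom⟩ := hreal (G F)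
    obtain ⟨x, hx, hxr⟩ := exists_strictMono_of_iso e
    -- thin out to make nCode minimal on tails
    set k := argk (nCode x) with hk
    set y := x ∘ k with hy
    have hky : StrictMono y := hx.comp (argk_strictMono (nCode x))
    have hseg : ∀ i j : ℕ, i < j → nIdx (x (k i)) (x (k j)) = nCode x (k i) := by
      intro i j hij
      refine nIdx_seg hx ((argk_strictMono (nCode x)) hij) ?_
      intro m hm _
      exact argk_min (nCode x) i m hm
    have hycode : ∀ i, nCode y i = nCode x (k i) := by
      intro i
      have := hseg i (i + 1) (lt_add_one i)
      simpa [nCode, hy, Function.comp] using this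
    have hmono : Monotone (nCode y) := by
      intro i j hij
      rw [hycode, hycode]
      exact argk_min (nCode x) i (k j) ((argk_strictMono (nCode x)).monotone hij)
    have hyinj : Function.Injective (nCode y) := nCode_injective hky
    have hysm : StrictMono (nCode y) := hmono.strictMono_of_injective hyinj
    refine ⟨Set.range (nCode y), Set.infinite_range_of_injective hyinj, ?_⟩
    -- value of F on the big set
    have hByH : Set.range y ⊆ H := by
      rw [← hxr]; rintro a ⟨i, rfl⟩; exact ⟨k i, rfl⟩
    have hFB : F (Set.range (nCode y)) = G F H := by
      rw [← G_eq F hky]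
      exact hhom (Set.range y) hByH (nonempty_iso_of_strictMono hky)
    intro A hA hAinf
    -- enumerate A
    haveI : Infinite ↥A := hAinf.to_subtype
    set a : ℕ ↪o ℕ := Nat.orderEmbeddingOfSet A with ha
    have har : Set.range ⇑a = A := Nat.orderEmbeddingOfSet_range A
    have hmemB : ∀ t, ∃ m, nCode y m = a t := by
      intro t
      have : a t ∈ Set.range (nCode y) := hA (har ▸ Set.mem_range_self t)
      exact this
    choose g hg using hmemB
    have hgsm : StrictMono g := by
      intro t t' h
      have : nCode y (g t) < nCode y (g t') := by
        rw [hg, hg]; exact a.strictMono h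
      exact hysm.lt_iff_lt.mp this
    set z := y ∘ g with hz
    have hzsm : StrictMono z := hky.comp hgsm
    have hzcode : ∀ t, nCode z t = a t := by
      intro t
      have h1 : nCode z t = nIdx (x (k (g t))) (x (k (g (t + 1)))) := rfl
      rw [h1, hseg (g t) (g (t + 1)) (hgsm (lt_add_one t)), ← hycode, hg]
    have hzr : Set.range (nCode z) = A := by
      rw [← har]
      ext n
      constructor
      · rintro ⟨t, rfl⟩; exact ⟨t, (hzcode t).symm⟩
      · rintro ⟨t, rfl⟩; exact ⟨t, hzcode t⟩
    have hzH : Set.range z ⊆ H := fun b hb => by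
      obtain ⟨t, rfl⟩ := hb
      exact hByH ⟨g t, rfl⟩
    have hFA : F A = G F H := by
      rw [← hzr, ← G_eq F hzsm]
      exact hhom (Set.range z) hzH (nonempty_iso_of_strictMono hzsm)
    rw [hFA, hFB]
  · -- easy direction: restrict to the copy ℕ ⊆ ℝ
    intro homega F
    obtain ⟨H, hHinf, hhom⟩ := homega (fun A => F ((fun n : ℕ => (n : ℝ)) '' A))
    haveI : Infinite ↥H := hHinf.to_subtype
    set u : ℕ ↪o ℕ := Nat.orderEmbeddingOfSet H with hu
    have hur : Set.range ⇑u = H := Nat.orderEmbeddingOfSet_range H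
    set x : ℕ → ℝ := fun n => ((u n : ℕ) : ℝ) with hxdef
    have hxsm : StrictMono x := fun i j h => by
      show ((u i : ℕ) : ℝ) < ((u j : ℕ) : ℝ)
      exact_mod_cast u.strictMono h
    have hxr : Set.range x = (fun n : ℕ => (n : ℝ)) '' H := by
      rw [← hur]
      ext r
      constructor
      · rintro ⟨n, rfl⟩; exact ⟨u n, ⟨n, rfl⟩, rfl⟩
      · rintro ⟨n, ⟨m, rfl⟩, rfl⟩; exact ⟨m, rfl⟩
    refine ⟨Set.range x, nonempty_iso_of_strictMono hxsm, ?_⟩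
    intro s hs ⟨es⟩
    set A : Set ℕ := {n : ℕ | (n : ℝ) ∈ s} with hA
    have hcast : Function.Injective (fun n : ℕ => (n : ℝ)) := fun a b h => Nat.cast_injective h
    have hsA : (fun n : ℕ => (n : ℝ)) '' A = s := by
      ext r
      constructor
      · rintro ⟨n, hn, rfl⟩; exact hn
      · intro hr
        obtain ⟨n, rfl⟩ := hs hr
        exact ⟨u n, show ((u n : ℕ) : ℝ) ∈ s from hr, rfl⟩
    have hAH : A ⊆ H := by
      intro n hn
      have : (n : ℝ) ∈ Set.range x := hs hn
      rw [hxr] at this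
      obtain ⟨m, hm, hmn⟩ := this
      rwa [← hcast hmn]
    have hAinf : A.Infinite := by
      have hsinf : s.Infinite := by
        rw [← Set.infinite_coe_iff]
        exact Infinite.of_surjective ⇑es es.surjective
      rw [← hsA] at hsinf
      exact Set.Infinite.of_image _ hsinf
    calc F s = F ((fun n : ℕ => (n : ℝ)) '' A) := by rw [hsA]
      _ = F ((fun n : ℕ => (n : ℝ)) '' H) := hhom A hAH hAinf
      _ = F (Set.range x) := by rw [hxr]
end

section
/- Every countably infinite linear order is inexact: it admits an order-preserving injection into itself whose image is a proper subset (equivalently, it is order-isomorphic to a proper subset of itself). -/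
/-!
Call `a` and `b` close if the interval between them is finite; the classes of this equivalence
(the finite condensation) are convex. If some class is infinite, it is an infinite convex piece in
which all intervals are finite, so it contains a convex copy of `ℕ` or of `ℕᵒᵈ`; shifting that copy
by one step and fixing everything else is a non-surjective self-embedding. If all classes are
finite, their least elements form a densely ordered subset with at least two points, and by
Cantor's back-and-forth argument the countable order `L` embeds into the part of it strictly above
one of its points.
-/

open Set

def IsInexact (L : Type*) [LinearOrder L] : Prop :=
  ∃ f : L ↪o L, range f ≠ univ

namespace IsInexact

variable {L : Type*} [LinearOrder L]

theorem of_orderDual (h : IsInexact Lᵒᵈ) : IsInexact L :=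
  let ⟨f, hf⟩ := h
  ⟨f.dual, hf⟩

theorem of_ordConnected {C : Set L} (hC : C.OrdConnected) (h : IsInexact C) :
    IsInexact L := by
  classical
  obtain ⟨g, hg⟩ := h
  obtain ⟨c, hc⟩ := (ne_univ_iff_exists_notMem _).1 hg
  have below {u v : L} (hu : u ∈ C) (hv : v ∉ C) (huv : u < v) {w : L} (hw : w ∈ C) : w < v :=
    not_le.1 fun hvw => hv (hC.out hu hw ⟨huv.le, hvw⟩)
  have above {u v : L} (hu : u ∈ C) (hv : v ∉ C) (hvu : v < u) {w : L} (hw : w ∈ C) : v < w :=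
    not_le.1 fun hwv => hv (hC.out hw hu ⟨hwv, hvu.le⟩)
  let f : L → L := fun y => if hy : y ∈ C then g ⟨y, hy⟩ else y
  have hf : StrictMono f := by
    intro u v huv
    by_cases hu : u ∈ C <;> by_cases hv : v ∈ C <;> simp only [f, hu, hv, dite_true, dite_false]
    · exact g.strictMono (Subtype.mk_lt_mk.2 huv)
    · exact below hu hv huv (g _).2
    · exact above hv hu huv (g _).2
    · exact huv
  refine ⟨OrderEmbedding.ofStrictMono f hf, fun hrange => ?_⟩
  obtain ⟨y, hy⟩ := hrange.symm ▸ mem_univ (c : L)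
  by_cases hyC : y ∈ C
  · exact hc ⟨⟨y, hyC⟩, Subtype.ext (by simpa [f, hyC] using hy)⟩
  · have : y = c := by simpa [f, hyC] using hy
    exact hyC (this ▸ c.2)

end IsInexact

theorem isInexact_of_locallyFiniteOrder_orderBot (α : Type*) [LinearOrder α]
    [LocallyFiniteOrder α] [OrderBot α] [Infinite α] : IsInexact α := by
  have : NoMaxOrder α := ⟨fun a => by
    by_contra! h
    exact infinite_univ ((finite_Icc ⊥ a).subset fun b _ => ⟨bot_le, h b⟩)⟩
  let := LinearLocallyFiniteOrder.succOrder α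
  refine ⟨OrderEmbedding.ofStrictMono _ Order.succ_strictMono, fun h => ?_⟩
  obtain ⟨a, ha⟩ := h.symm ▸ mem_univ (⊥ : α)
  exact Order.succ_ne_bot a ha

theorem isInexact_of_locallyFiniteOrder (α : Type*) [LinearOrder α] [LocallyFiniteOrder α]
    [Infinite α] : IsInexact α := by
  classical
  obtain ⟨a⟩ := ‹Infinite α›.nonempty
  have : (Iic a ∪ Ici a).Infinite := by rw [Iic_union_Ici]; exact infinite_univ
  rcases infinite_union.1 this with h | h
  · have : Infinite (Iic a)ᵒᵈ := h.to_subtype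
    exact (isInexact_of_locallyFiniteOrder_orderBot (Iic a)ᵒᵈ).of_orderDual.of_ordConnected
      ordConnected_Iic
  · have := h.to_subtype
    exact (isInexact_of_locallyFiniteOrder_orderBot (Ici a)).of_ordConnected ordConnected_Ici

theorem isInexact_of_denselyOrdered_subset {L : Type*} [LinearOrder L] [Countable L] {S : Set L}
    [DenselyOrdered S] (hS : S.Nontrivial) : IsInexact L := by
  obtain ⟨s, hs, t, ht, hst⟩ := hS
  wlog hlt : s < t generalizing s t
  · exact this t ht s hs hst.symm (hst.lt_or_gt.resolve_left hlt)
  obtain ⟨m, hsm, hmt⟩ := exists_between (show (⟨s, hs⟩ : S) < ⟨t, ht⟩ from hlt)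
  have : Nontrivial (Ioi (⟨s, hs⟩ : S)) :=
    ⟨⟨⟨m, hsm⟩, ⟨_, hlt⟩, fun h => hmt.ne (congrArg Subtype.val h)⟩⟩
  obtain ⟨e⟩ := Order.embedding_from_countable_to_dense L (Ioi (⟨s, hs⟩ : S))
  refine ⟨(e.trans (OrderEmbedding.subtype _)).trans (OrderEmbedding.subtype _), fun h => ?_⟩
  obtain ⟨y, hy⟩ := h.symm ▸ mem_univ s
  exact (e y).2.ne hy.symm

def FiniteGap {L : Type*} [LinearOrder L] (a b : L) : Prop := (uIcc a b).Finite

namespace FiniteGap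

variable {L : Type*} [LinearOrder L] {a b c : L}

theorem symm (h : FiniteGap a b) : FiniteGap b a := by
  rwa [FiniteGap, uIcc_comm]

theorem trans (hab : FiniteGap a b) (hbc : FiniteGap b c) : FiniteGap a c :=
  (hab.union hbc).subset uIcc_subset_uIcc_union_uIcc

theorem of_mem_uIcc (hab : FiniteGap a b) (hc : c ∈ uIcc a b) : FiniteGap a c :=
  hab.subset (uIcc_subset_uIcc left_mem_uIcc hc)

end FiniteGap

section FiniteCondensation

variable {L : Type*} [LinearOrder L]

theorem ordConnected_setOf_finiteGap (a : L) : {y | FiniteGap a y}.OrdConnected :=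
  ⟨fun _ hx _ hy _ hz => hx.trans ((hx.symm.trans hy).of_mem_uIcc (Icc_subset_uIcc hz))⟩

theorem isInexact_of_infinite_finiteGap_class {a : L} (h : {y | FiniteGap a y}.Infinite) :
    IsInexact L := by
  have := h.to_subtype
  let _ : LocallyFiniteOrder {y | FiniteGap a y} := .ofFiniteIcc fun u v =>
    (FiniteGap.trans u.2.symm v.2 |>.preimage Subtype.val_injective.injOn).subset
      fun _ hz => Icc_subset_uIcc hz
  exact (isInexact_of_locallyFiniteOrder _).of_ordConnected (ordConnected_setOf_finiteGap a)

variable (L) in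
def finiteGapMins : Set L := {m | ∀ y, FiniteGap m y → m ≤ y}

theorem exists_finiteGap_mem_finiteGapMins {a : L} (ha : {y | FiniteGap a y}.Finite) :
    ∃ m ∈ finiteGapMins L, FiniteGap a m := by
  obtain ⟨m, ham, hm⟩ := exists_min_image _ id ha ⟨a, by simp [FiniteGap]⟩
  exact ⟨m, fun y hmy => hm y (ham.trans hmy), ham⟩

theorem denselyOrdered_finiteGapMins (hfin : ∀ a : L, {y | FiniteGap a y}.Finite) :
    DenselyOrdered (finiteGapMins L) := by
  refine ⟨?_⟩
  rintro ⟨x, hx⟩ ⟨y, hy⟩ (hxy : x < y)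
  have hgap : (Icc x y).Infinite := by
    rw [← uIcc_of_le hxy.le]
    exact fun h => hxy.not_ge (hy x (FiniteGap.symm h))
  obtain ⟨w, ⟨hxw, hwy⟩, hw⟩ := (hgap.sdiff ((hfin x).union (hfin y))).nonempty
  simp only [mem_union, mem_ofPred_eq, not_or] at hw
  -- the least element of the class of `w` lies strictly between `x` and `y`
  obtain ⟨m, hm, hwm⟩ := exists_finiteGap_mem_finiteGapMins (hfin w)
  have hmw : m ≤ w := hm w hwm.symm
  refine ⟨⟨m, hm⟩, (not_le.1 fun hmx => ?_ : x < m),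
    (lt_of_le_of_ne (hmw.trans hwy) ?_ : m < y)⟩
  · exact hw.1 ((hwm.symm.of_mem_uIcc (Icc_subset_uIcc ⟨hmx, hxw⟩)).symm.trans hwm.symm)
  · rintro rfl
    exact hw.2 hwm.symm

theorem nontrivial_finiteGapMins [Infinite L] (hfin : ∀ a : L, {y | FiniteGap a y}.Finite) :
    (finiteGapMins L).Nontrivial := by
  obtain ⟨a⟩ := ‹Infinite L›.nonempty
  obtain ⟨b, hb⟩ := (hfin a).infinite_compl.nonempty
  obtain ⟨m, hm, ham⟩ := exists_finiteGap_mem_finiteGapMins (hfin a)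
  obtain ⟨n, hn, hbn⟩ := exists_finiteGap_mem_finiteGapMins (hfin b)
  exact ⟨m, hm, n, hn, fun hmn => hb (ham.trans (hmn ▸ hbn.symm))⟩

theorem isInexact_of_finite_finiteGap_classes [Countable L] [Infinite L]
    (hfin : ∀ a : L, {y | FiniteGap a y}.Finite) : IsInexact L :=
  have := denselyOrdered_finiteGapMins hfin
  isInexact_of_denselyOrdered_subset (nontrivial_finiteGapMins hfin)

end FiniteCondensation

/-- (Dushnik–Miller) Every countably infinite linear order is inexact: it admits
an order-embedding into itself whose image is a proper subset. -/
theorem countable_infinite_linear_order_inexact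
    (L : Type*) [LinearOrder L] [Countable L] [Infinite L] :
    ∃ f : L ↪o L, Set.range f ≠ Set.univ := by
  by_cases hfin : ∀ a : L, {y | FiniteGap a y}.Finite
  · exact isInexact_of_finite_finiteGap_classes hfin
  · obtain ⟨a, ha⟩ := not_forall.1 hfin
    exact isInexact_of_infinite_finiteGap_class ha
end

section
/- In ZF with Countable Choice for sets of reals: if A ⊆ ℝ contains a subset order-isomorphic to ⟨ℝ,<⟩, then A contains a nonempty perfect subset. -/
open Set Topology Filter

private lemma cantor_not_countable : ¬ Countable (ℕ → Bool) := by
  classical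
  intro h
  have hinj : Function.Injective (fun s : Set ℕ => (fun n => decide (n ∈ s) : ℕ → Bool)) := by
    intro s t hst
    ext n
    have := congrFun hst n
    simpa using this
  have h0 : Cardinal.mk (Set ℕ) ≤ Cardinal.mk (ℕ → Bool) := Cardinal.mk_le_of_injective hinj
  have h1 : Cardinal.mk (ℕ → Bool) ≤ Cardinal.aleph0 := Cardinal.mk_le_aleph0
  have h2 := Cardinal.cantor (Cardinal.mk ℕ)
  rw [← Cardinal.mk_set, Cardinal.mk_nat] at h2
  exact absurd ((h2.trans_le h0).trans_le h1) (lt_irrefl _)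

/-- A continuous injection of Cantor space into a T2 space has perfect range. -/
private lemma perfect_range_of_cantor_inj {f : (ℕ → Bool) → ℝ}
    (hc : Continuous f) (hinj : Function.Injective f) : Perfect (Set.range f) := by
  constructor
  · exact (isCompact_range hc).isClosed
  · intro p hp
    obtain ⟨u, rfl⟩ := hp
    rw [accPt_iff_frequently]
    set uk : ℕ → (ℕ → Bool) := fun k n => if n < k then u n else !u n with huk
    have hne : ∀ k, uk k ≠ u := by
      intro k h
      have := congrFun h k
      simp [huk] at this
    have htend : Tendsto uk atTop (𝓝 u) := by
      rw [tendsto_pi_nhds]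
      intro n
      exact tendsto_atTop_of_eventually_const (i₀ := n + 1)
        (fun k hk => by simp [huk, Nat.lt_of_lt_of_le (Nat.lt_succ_self n) hk])
    have htf : Tendsto (fun k => f (uk k)) atTop (𝓝 (f u)) :=
      (hc.tendsto u).comp htend
    exact htf.frequently (Frequently.of_forall fun k =>
      ⟨fun h => hne k (hinj h), mem_range_self _⟩)

/-- (ZF + AC_ω(ℝ)) If `A ⊆ ℝ` contains a subset order-isomorphic to `⟨ℝ,<⟩`,
then `A` contains a nonempty perfect subset. -/
theorem copy_of_reals_gives_perfect_subset
    (acω : ∀ X : ℕ → Set ℝ, (∀ n, (X n).Nonempty) →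
      ∃ f : ℕ → ℝ, ∀ n, f n ∈ X n)
    (A : Set ℝ) (hB : ∃ B : Set ℝ, B ⊆ A ∧ Nonempty (↥B ≃o ℝ)) :
    ∃ P : Set ℝ, P ⊆ A ∧ Perfect P ∧ P.Nonempty := by
  classical
  obtain ⟨B, hBA, ⟨e⟩⟩ := hB
  set a : ℝ := ((e.symm 0 : ↥B) : ℝ) with ha
  set b : ℝ := ((e.symm 1 : ↥B) : ℝ) with hb
  have haB : a ∈ B := (e.symm 0).2
  have hbB : b ∈ B := (e.symm 1).2
  have hab : a < b := by
    have : e.symm 0 < e.symm 1 := e.symm.strictMono zero_lt_one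
    exact this
  set K : Set ℝ := closure B ∩ Icc a b with hK
  have hKclosed : IsClosed K := isClosed_closure.inter isClosed_Icc
  -- K is uncountable
  have hKunc : ¬ K.Countable := by
    intro hc
    have hIcc : (Set.Icc (0:ℝ) 1).Countable := by
      have hsub : Set.Icc (0:ℝ) 1 ⊆ (fun r => ((e.symm r : ↥B) : ℝ)) ⁻¹' K := by
        intro r hr
        have h0 : e.symm 0 ≤ e.symm r := e.symm.monotone hr.1
        have h1 : e.symm r ≤ e.symm 1 := e.symm.monotone hr.2
        exact ⟨subset_closure (e.symm r).2, ⟨h0, h1⟩⟩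
      have hinj : Function.Injective (fun r => ((e.symm r : ↥B) : ℝ)) :=
        fun r s h => e.symm.injective (Subtype.val_injective h)
      exact (hc.preimage hinj).mono hsub
    have := hIcc.le_aleph0
    rw [Cardinal.mk_Icc_real zero_lt_one] at this
    exact absurd this (not_le.mpr Cardinal.aleph0_lt_continuum)
  set N : Set ℝ := K \ B with hN
  -- N is countable : gap argument using order-completeness of B
  have hgap : ∀ x ∈ N, (∃ s ∈ B, x < s ∧ ∀ y ∈ B, y ∉ Ioo x s) ∨
      (∃ t ∈ B, t < x ∧ ∀ y ∈ B, y ∉ Ioo t x) := by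
    rintro x ⟨⟨hxcl, hxa, hxb⟩, hxB⟩
    set S : Set ↥B := {y | (y : ℝ) ≤ x} with hS
    set T : Set ↥B := {y | x ≤ (y : ℝ)} with hT
    have hSne : S.Nonempty := ⟨⟨a, haB⟩, hxa⟩
    have hTne : T.Nonempty := ⟨⟨b, hbB⟩, hxb⟩
    have hSbdd : BddAbove S := ⟨⟨b, hbB⟩, fun y hy => show (y : ℝ) ≤ b from le_trans hy hxb⟩
    have hTbdd : BddBelow T := ⟨⟨a, haB⟩, fun y hy => show a ≤ (y : ℝ) from le_trans hxa hy⟩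
    have hsl : IsLUB S (e.symm (sSup (e '' S))) :=
      e.isLUB_image.mp (isLUB_csSup (hSne.image e) (e.monotone.map_bddAbove hSbdd))
    have htl : IsGLB T (e.symm (sInf (e '' T))) :=
      e.isGLB_image.mp (isGLB_csInf (hTne.image e) (e.monotone.map_bddBelow hTbdd))
    set sB : ↥B := e.symm (sSup (e '' S)) with hsB
    set tB : ↥B := e.symm (sInf (e '' T)) with htB
    have hst : (sB : ℝ) ≤ (tB : ℝ) := by
      have h1 : sB ≤ tB := htl.2 (fun y hy => hsl.2 (fun z hz =>
        show (z : ℝ) ≤ (y : ℝ) from le_trans hz hy))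
      exact h1
    have hBint : ∀ y ∈ B, y ∉ Ioo (sB : ℝ) (tB : ℝ) := by
      rintro y hy ⟨h1, h2⟩
      rcases le_total y x with h | h
      · exact absurd (hsl.1 (show (⟨y, hy⟩ : ↥B) ∈ S from h)) (not_le.mpr h1)
      · exact absurd (htl.1 (show (⟨y, hy⟩ : ↥B) ∈ T from h)) (not_le.mpr h2)
    rcases lt_or_ge x (sB : ℝ) with hxs | hsx
    · -- gap (x, sB)
      left
      refine ⟨sB, sB.2, hxs, fun y hy ⟨h1, h2⟩ => ?_⟩
      have hyT : (⟨y, hy⟩ : ↥B) ∈ T := le_of_lt h1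
      have := htl.1 hyT
      have : (tB : ℝ) ≤ y := this
      linarith
    · rcases lt_or_ge (tB : ℝ) x with hxt | htx
      · -- gap (tB, x)
        right
        refine ⟨tB, tB.2, hxt, fun y hy ⟨h1, h2⟩ => ?_⟩
        have hyS : (⟨y, hy⟩ : ↥B) ∈ S := le_of_lt h2
        have : (y : ℝ) ≤ (sB : ℝ) := hsl.1 hyS
        linarith
      · -- sB ≤ x ≤ tB, strict since x ∉ B : contradiction with x ∈ closure B
        exfalso
        have hsx' : (sB : ℝ) < x := lt_of_le_of_ne hsx (fun h => hxB (h ▸ sB.2))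
        have htx' : x < (tB : ℝ) := lt_of_le_of_ne htx (fun h => hxB (h ▸ tB.2))
        rw [mem_closure_iff] at hxcl
        obtain ⟨y, hy, hyB⟩ := hxcl (Ioo (sB : ℝ) (tB : ℝ)) isOpen_Ioo ⟨hsx', htx'⟩
        exact hBint y hyB hy
  -- strengthen the gap to a rational-indexed gap avoiding `closure B`
  have key : ∀ x : ↥N, ∃ p : ℚ × Bool,
      (p.2 = true → ((x : ℝ) < (p.1 : ℝ) ∧ ∀ y ∈ closure B, y ∉ Ioo (x : ℝ) (p.1 : ℝ))) ∧
      (p.2 = false → (((p.1 : ℝ) < (x : ℝ)) ∧ ∀ y ∈ closure B, y ∉ Ioo ((p.1 : ℝ)) (x : ℝ))) := by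
    rintro ⟨x, hx⟩
    rcases hgap x hx with ⟨s, hsB', hxs, hgap'⟩ | ⟨t, htB', htx, hgap'⟩
    · obtain ⟨q, hq1, hq2⟩ := exists_rat_btwn hxs
      refine ⟨(q, true), fun _ => ⟨hq1, fun y hy hy2 => ?_⟩, by simp⟩
      have hopen : IsOpen (Ioo x (q : ℝ)) := isOpen_Ioo
      have hsubcl : Ioo x (q : ℝ) ∩ closure B ⊆ closure (Ioo x (q : ℝ) ∩ B) :=
        hopen.inter_closure
      have hempty : Ioo x (q : ℝ) ∩ B = ∅ := by
        ext z; simp only [mem_inter_iff, mem_empty_iff_false, iff_false, not_and]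
        intro hz hzB
        exact hgap' z hzB ⟨hz.1, lt_trans hz.2 hq2⟩
      have := hsubcl ⟨hy2, hy⟩
      rw [hempty, closure_empty] at this
      exact this
    · obtain ⟨q, hq1, hq2⟩ := exists_rat_btwn htx
      refine ⟨(q, false), by simp, fun _ => ⟨hq2, fun y hy hy2 => ?_⟩⟩
      have hopen : IsOpen (Ioo (q : ℝ) x) := isOpen_Ioo
      have hsubcl : Ioo (q : ℝ) x ∩ closure B ⊆ closure (Ioo (q : ℝ) x ∩ B) :=
        hopen.inter_closure
      have hempty : Ioo (q : ℝ) x ∩ B = ∅ := by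
        ext z; simp only [mem_inter_iff, mem_empty_iff_false, iff_false, not_and]
        intro hz hzB
        exact hgap' z hzB ⟨lt_trans hq1 hz.1, hz.2⟩
      have := hsubcl ⟨hy2, hy⟩
      rw [hempty, closure_empty] at this
      exact this
  have hNcl : ∀ x ∈ N, x ∈ closure B := fun x hx => hx.1.1
  have hNB : N.Countable := by
    choose F hF1 hF2 using key
    have Finj : Function.Injective F := by
      intro x y hxy
      by_contra hne
      have hxNcl : (x : ℝ) ∈ closure B := hNcl x x.2
      have hyNcl : (y : ℝ) ∈ closure B := hNcl y y.2
      rcases Bool.eq_false_or_eq_true (F x).2 with hbx | hbx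
      · -- hbx : (F x).2 = true (apparently first case), gap to the right
        obtain ⟨h1x, h2x⟩ := hF1 x hbx
        obtain ⟨h1y, h2y⟩ := hF1 y (hxy ▸ hbx)
        have hq : (F x).1 = (F y).1 := by rw [hxy]
        rcases lt_trichotomy (x : ℝ) (y : ℝ) with h | h | h
        · exact h2x (y : ℝ) hyNcl ⟨h, by rw [hq]; exact h1y⟩
        · exact hne (Subtype.ext h)
        · exact h2y (x : ℝ) hxNcl ⟨h, by rw [← hq]; exact h1x⟩
      · -- gap to the left
        obtain ⟨h1x, h2x⟩ := hF2 x hbx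
        obtain ⟨h1y, h2y⟩ := hF2 y (hxy ▸ hbx)
        have hq : (F x).1 = (F y).1 := by rw [hxy]
        rcases lt_trichotomy (x : ℝ) (y : ℝ) with h | h | h
        · exact h2y (x : ℝ) hxNcl ⟨by rw [← hq]; exact h1x, h⟩
        · exact hne (Subtype.ext h)
        · exact h2x (y : ℝ) hyNcl ⟨by rw [hq]; exact h1y, h⟩
    have : Countable ↥N := Finj.countable
    exact Set.countable_coe_iff.mp this
  -- Cantor injection into K
  obtain ⟨f, hfK, hfc, hfinj⟩ := hKclosed.exists_nat_bool_injection_of_not_countable hKunc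
  -- interleaving trick to avoid N
  set j : (ℕ → Bool) → (ℕ → Bool) → ℕ → Bool :=
    fun z x n => if n % 2 = 0 then z (n / 2) else x (n / 2) with hj
  set g : (ℕ → Bool) → (ℕ → Bool) → ℝ := fun z x => f (j z x) with hg
  have hjodd : ∀ z x m, j z x (2 * m + 1) = x m := by
    intro z x m
    have h1 : (2 * m + 1) % 2 = 1 := by omega
    have h2 : (2 * m + 1) / 2 = m := by omega
    simp [hj, h1, h2]
  have hjeven : ∀ z x m, j z x (2 * m) = z m := by
    intro z x m
    have h1 : (2 * m) % 2 = 0 := by omega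
    have h2 : (2 * m) / 2 = m := by omega
    simp [hj, h1, h2]
  have hginj : ∀ z, Function.Injective (g z) := by
    intro z x y hxy
    have hjxy : j z x = j z y := hfinj hxy
    funext m
    have := congrFun hjxy (2 * m + 1)
    rwa [hjodd, hjodd] at this
  have hgdisj : ∀ z z' x x', g z x = g z' x' → z = z' := by
    intro z z' x x' h
    have hjj : j z x = j z' x' := hfinj h
    funext m
    have := congrFun hjj (2 * m)
    rwa [hjeven, hjeven] at this
  have hgcont : ∀ z, Continuous (g z) := by
    intro z
    apply hfc.comp
    apply continuous_pi
    intro n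
    by_cases h : n % 2 = 0
    · simp only [hj, h, if_true]
      exact continuous_const
    · simp only [hj, h, if_false]
      exact continuous_apply _
  -- pick a good z
  set Bad : Set (ℕ → Bool) := {z | ∃ x, g z x ∈ N} with hBad
  have hBadCount : Countable ↥Bad := by
    have : ∀ z : ↥Bad, ∃ w : ↥N, ∃ x, g z x = (w : ℝ) := by
      rintro ⟨z, ⟨x, hx⟩⟩
      exact ⟨⟨g z x, hx⟩, x, rfl⟩
    choose W hW using this
    have hWinj : Function.Injective W := by
      intro z z' h
      obtain ⟨x, hx⟩ := hW z
      obtain ⟨x', hx'⟩ := hW z'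
      apply Subtype.ext
      apply hgdisj _ _ x x'
      rw [hx, hx', h]
    have : Countable ↥N := hNB.to_subtype
    exact hWinj.countable
  have : ∃ z, z ∉ Bad := by
    by_contra h
    push_neg at h
    have huniv : Bad = Set.univ := eq_univ_of_forall h
    have hcu : (Set.univ : Set (ℕ → Bool)).Countable :=
      huniv ▸ (Set.countable_coe_iff.mpr hBadCount)
    have : Countable (ℕ → Bool) := by
      have := hcu.to_subtype
      exact Countable.of_equiv _ (Equiv.Set.univ _)
    exact cantor_not_countable this
  obtain ⟨z, hz⟩ := this
  refine ⟨Set.range (g z), ?_, perfect_range_of_cantor_inj (hgcont z) (hginj z), ?_⟩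
  · rintro p ⟨x, rfl⟩
    have hpK : g z x ∈ K := hfK (mem_range_self _)
    have hpN : g z x ∉ N := fun hn => hz ⟨x, hn⟩
    have hpB : g z x ∈ B := by
      by_contra hpb
      exact hpN ⟨hpK, hpb⟩
    exact hBA hpB
  · exact ⟨g z (fun _ => true), ⟨(fun _ => true), rfl⟩⟩
end

section
/- If P ⊆ ℝ is a nonempty perfect set and T ⊆ P is countable, then P \ T contains a nonempty perfect set. -/
open Set Filter Topology

/-- If `P ⊆ ℝ` is a nonempty perfect set and `T ⊆ P` is countable, then `P \ T`
contains a nonempty perfect set. -/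
theorem perfect_minus_countable_contains_perfect
    (P : Set ℝ) (hP : Perfect P) (hPne : P.Nonempty)
    (T : Set ℝ) (hT : T ⊆ P) (hTc : T.Countable) :
    ∃ Q : Set ℝ, Q ⊆ P \ T ∧ Perfect Q ∧ Q.Nonempty := by
  obtain ⟨f, hfr, hfc, hfi⟩ := hP.exists_nat_bool_injection hPne
  -- evens map
  set e : (ℕ → Bool) → (ℕ → Bool) := fun y n => y (2 * n) with he
  have hec : Continuous e := continuous_pi fun n => continuous_apply _
  -- choose a avoiding the evens of preimages of T
  have hS : (e '' (f ⁻¹' T)).Countable := (hTc.preimage hfi).image e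
  haveI : Uncountable (ℕ → Bool) := by
    constructor
    intro h
    classical
    have hinj : Function.Injective (fun s : Set ℕ => (fun n => decide (n ∈ s) : ℕ → Bool)) := by
      intro s t hst
      ext n
      simpa using congrFun hst n
    haveI : Countable (Set ℕ) := hinj.countable
    obtain ⟨g, hg⟩ := exists_injective_nat (Set ℕ)
    exact Function.cantor_injective g hg
  obtain ⟨a, ha⟩ : ∃ a, a ∉ e '' (f ⁻¹' T) := by
    by_contra h
    push_neg at h
    exact (Set.not_countable_univ (α := ℕ → Bool))
      (by simpa [Set.eq_univ_iff_forall.2 h] using hS)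
  set A : Set (ℕ → Bool) := e ⁻¹' {a} with hA
  have hAclosed : IsClosed A := isClosed_singleton.preimage hec
  have hAcomp : IsCompact A := hAclosed.isCompact
  set Q : Set ℝ := f '' A with hQ
  have hAne : A.Nonempty := by
    refine ⟨fun n => if h : Even n then a (n / 2) else false, ?_⟩
    simp only [hA, Set.mem_preimage, Set.mem_singleton_iff]
    funext n
    simp [he, Nat.mul_div_cancel_left n (by norm_num : 0 < 2)]
  refine ⟨Q, ?_, ⟨(hAcomp.image hfc).isClosed, ?_⟩, hAne.image f⟩
  · rintro x ⟨y, hy, rfl⟩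
    refine ⟨hfr ⟨y, rfl⟩, fun hfy => ha ⟨y, hfy, hy⟩⟩
  · rintro x ⟨y, hy, rfl⟩
    rw [accPt_iff_nhds]
    intro U hU
    have hUy : f ⁻¹' U ∈ 𝓝 y := hfc.continuousAt.preimage_mem_nhds hU
    -- the sequence flipping odd coordinate 2k+1 tends to y
    set yk : ℕ → (ℕ → Bool) := fun k => Function.update y (2 * k + 1) (!y (2 * k + 1)) with hyk
    have htend : Tendsto yk atTop (𝓝 y) := by
      rw [tendsto_pi_nhds]
      intro i
      refine tendsto_nhds_of_eventually_eq ?_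
      filter_upwards [eventually_ge_atTop (i + 1)] with k hk
      have : i ≠ 2 * k + 1 := by omega
      simp [hyk, Function.update_of_ne this]
    obtain ⟨k, hk⟩ := (htend.eventually hUy).exists
    refine ⟨f (yk k), ⟨hk, ⟨yk k, ?_, rfl⟩⟩, ?_⟩
    · simp only [hA, Set.mem_preimage, Set.mem_singleton_iff] at hy ⊢
      rw [← hy]
      funext n
      simp [he, hyk, Function.update_of_ne (by omega : 2 * n ≠ 2 * k + 1)]
    · intro hcon
      have : yk k = y := hfi hcon
      have := congrFun this (2 * k + 1)
      simp [hyk] at this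
end

section
/- If X ⊆ ℝ is inexact as a linear order (order-isomorphic to a proper subset of itself), then there exist a subset Y ⊆ X order-isomorphic to X and a nonempty open interval O ⊆ ℝ such that O ∩ X ≠ ∅ but O ∩ Y = ∅. -/
private lemma aux_up (X : Set ℝ) (F : ↥X → ↥X) (hF : StrictMono F)
    (z : ↥X) (hz : z < F z) :
    ∃ Y : Set ℝ, Y ⊆ X ∧ Nonempty (↥Y ≃o ↥X) ∧
      ∃ a b : ℝ, a < b ∧ (Set.Ioo a b ∩ X).Nonempty ∧ Set.Ioo a b ∩ Y = ∅ := by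
  classical
  set G : ↥X → ↥X := fun x => if x < z then x else F (F x) with hGdef
  have hGmono : StrictMono G := by
    intro x y hxy
    by_cases hx : x < z
    · by_cases hy : y < z
      · simpa [hGdef, hx, hy] using hxy
      · have hzy : z ≤ y := le_of_not_gt hy
        have h1 : F z ≤ F y := hF.monotone hzy
        have h2 : F (F z) ≤ F (F y) := hF.monotone h1
        have : x < F (F y) :=
          lt_of_lt_of_le (hx.trans (hz.trans (hF hz))) h2
        simpa [hGdef, hx, hy] using this
    · have hy : ¬ y < z := fun h => hx (hxy.trans h)
      simpa [hGdef, hx, hy] using hF (hF hxy)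
  set g : ↥X → ℝ := fun x => ↑(G x) with hgdef
  have hgmono : StrictMono g := fun x y h => by
    simpa [hgdef] using hGmono h
  refine ⟨Set.range g, ?_, ⟨(hgmono.orderIso g).symm⟩,
    (z : ℝ), ((F (F z)) : ℝ), ?_, ?_, ?_⟩
  · rintro r ⟨x, rfl⟩
    exact (G x).2
  · exact_mod_cast hz.trans (hF hz)
  · exact ⟨(F z : ℝ), ⟨by exact_mod_cast hz, by exact_mod_cast hF hz⟩, (F z).2⟩
  · rw [Set.eq_empty_iff_forall_notMem]
    rintro r ⟨⟨h1, h2⟩, x, rfl⟩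
    by_cases hx : x < z
    · have : g x < (z : ℝ) := by simpa [hgdef, hGdef, hx] using hx
      exact absurd h1 (not_lt.mpr this.le)
    · have hzx : z ≤ x := le_of_not_gt hx
      have : ((F (F z)) : ℝ) ≤ g x := by
        simpa [hgdef, hGdef, hx] using hF.monotone (hF.monotone hzx)
      exact absurd h2 (not_lt.mpr this)

private lemma aux_down (X : Set ℝ) (F : ↥X → ↥X) (hF : StrictMono F)
    (z : ↥X) (hz : F z < z) :
    ∃ Y : Set ℝ, Y ⊆ X ∧ Nonempty (↥Y ≃o ↥X) ∧
      ∃ a b : ℝ, a < b ∧ (Set.Ioo a b ∩ X).Nonempty ∧ Set.Ioo a b ∩ Y = ∅ := by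
  classical
  set G : ↥X → ↥X := fun x => if z < x then x else F (F x) with hGdef
  have hGmono : StrictMono G := by
    intro x y hxy
    by_cases hy : z < y
    · by_cases hx : z < x
      · simpa [hGdef, hx, hy] using hxy
      · have hxz : x ≤ z := le_of_not_gt hx
        have h2 : F (F x) ≤ F (F z) := hF.monotone (hF.monotone hxz)
        have : F (F x) < y := lt_of_le_of_lt h2 (((hF hz).trans hz).trans hy)
        simpa [hGdef, hx, hy] using this
    · have hx : ¬ z < x := fun h => hy (h.trans hxy)
      simpa [hGdef, hx, hy] using hF (hF hxy)
  set g : ↥X → ℝ := fun x => ↑(G x) with hgdef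
  have hgmono : StrictMono g := fun x y h => by
    simpa [hgdef] using hGmono h
  refine ⟨Set.range g, ?_, ⟨(hgmono.orderIso g).symm⟩,
    ((F (F z)) : ℝ), (z : ℝ), ?_, ?_, ?_⟩
  · rintro r ⟨x, rfl⟩
    exact (G x).2
  · exact_mod_cast (hF hz).trans hz
  · exact ⟨(F z : ℝ), ⟨by exact_mod_cast hF hz, by exact_mod_cast hz⟩, (F z).2⟩
  · rw [Set.eq_empty_iff_forall_notMem]
    rintro r ⟨⟨h1, h2⟩, x, rfl⟩
    by_cases hx : z < x
    · have : (z : ℝ) < g x := by simpa [hgdef, hGdef, hx] using hx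
      exact absurd h2 (not_lt.mpr this.le)
    · have hxz : x ≤ z := le_of_not_gt hx
      have : g x ≤ ((F (F z)) : ℝ) := by
        simpa [hgdef, hGdef, hx] using hF.monotone (hF.monotone hxz)
      exact absurd h1 (not_lt.mpr this)

/-- If `X ⊆ ℝ` is inexact as a linear order (order-isomorphic to a proper
subset of itself), then there are a subset `Y ⊆ X` order-isomorphic to `X` and
a nonempty open interval `O` with `O ∩ X ≠ ∅` but `O ∩ Y = ∅`. -/
theorem inexact_real_set_removable_interval
    (X : Set ℝ)
    (hinexact : ∃ Y : Set ℝ, Y ⊆ X ∧ Y ≠ X ∧ Nonempty (↥Y ≃o ↥X)) :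
    ∃ Y : Set ℝ, Y ⊆ X ∧ Nonempty (↥Y ≃o ↥X) ∧
      ∃ a b : ℝ, a < b ∧ (Set.Ioo a b ∩ X).Nonempty ∧ Set.Ioo a b ∩ Y = ∅ := by
  obtain ⟨Y0, hsub, hne, ⟨e⟩⟩ := hinexact
  set F : ↥X → ↥X := fun x => ⟨(e.symm x : ℝ), hsub (e.symm x).2⟩ with hFdef
  have hF : StrictMono F := by
    intro x y h
    have : e.symm x < e.symm y := by exact_mod_cast (e.symm.lt_iff_lt).mpr h
    exact_mod_cast this
  obtain ⟨zr, hzX, hzY0⟩ : ∃ zr ∈ X, zr ∉ Y0 := by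
    by_contra h
    push_neg at h
    exact hne (Set.Subset.antisymm hsub h)
  set z : ↥X := ⟨zr, hzX⟩ with hzdef
  have hFz : F z ≠ z := by
    intro h
    apply hzY0
    have : ((F z : ℝ)) ∈ Y0 := (e.symm z).2
    rwa [h] at this
  rcases lt_or_gt_of_ne hFz with h | h
  · exact aux_down X F hF z h
  · exact aux_up X F hF z h
end
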